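/- (Serret's theorem) Two irrational numbers x and y are GL₂(ℤ)-equivalent (∃ a,b,c,d ∈ ℤ, ad - bc = ±1, y = (ax+b)/(cx+d)) if and only if their continued fraction expansions have a common complete quotient. -/

import Mathlib

noncomputable def cq (x : ℝ) : ℕ → ℝ
  | 0 => x
  | n + 1 => 1 / (cq x n - ⌊cq x n⌋)

def CFEquiv (x y : ℝ) : Prop := ∃ i j : ℕ, cq x i = cq y j

lemma cq_succ (x : ℝ) (n : ℕ) : cq x (n + 1) = 1 / (cq x n - ⌊cq x n⌋) := rfl

lemma irrational_cq (x : ℝ) (hx : Irrational x) : ∀ n, Irrational (cq x n)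
  | 0 => hx
  | n + 1 => by
    have h1 : Irrational (cq x n - (⌊cq x n⌋ : ℤ)) := (irrational_cq x hx n).sub_intCast _
    rw [cq_succ, one_div]
    exact h1.inv

lemma cq_fract_pos (x : ℝ) (hx : Irrational x) (n : ℕ) : 0 < cq x n - ⌊cq x n⌋ := by
  have h := (irrational_cq x hx n).ne_int ⌊cq x n⌋
  have := Int.fract_pos.mpr h
  rwa [Int.fract] at this

lemma cq_fract_lt_one (x : ℝ) (n : ℕ) : cq x n - ⌊cq x n⌋ < 1 := by
  have := Int.fract_lt_one (cq x n)
  rwa [Int.fract] at this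

lemma one_lt_cq (x : ℝ) (hx : Irrational x) (n : ℕ) : 1 < cq x (n + 1) := by
  rw [cq_succ]
  exact (one_lt_div (cq_fract_pos x hx n)).mpr (cq_fract_lt_one x n)

lemma cq_shift (x : ℝ) (i : ℕ) : ∀ k, cq (cq x i) k = cq x (i + k)
  | 0 => rfl
  | k + 1 => by rw [cq_succ, cq_shift x i k, ← cq_succ, Nat.add_assoc]

lemma cq_one_add_int (u : ℝ) (m : ℤ) : cq (u + m) 1 = cq u 1 := by
  rw [cq_succ, cq_succ]
  show 1 / (u + m - ↑⌊u + (m:ℝ)⌋) = 1 / (u - ⌊u⌋)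
  rw [Int.floor_add_intCast]
  push_cast
  ring_nf

lemma lin_ne_zero (x : ℝ) (hx : Irrational x) (c d : ℤ) (h : ¬(c = 0 ∧ d = 0)) :
    (c : ℝ) * x + d ≠ 0 := by
  rcases eq_or_ne c 0 with hc | hc
  · subst hc
    simp only [Int.cast_zero, zero_mul, zero_add, ne_eq, Int.cast_eq_zero]
    intro hd; exact h ⟨rfl, hd⟩
  · intro h0
    apply hx
    refine ⟨(-d / c : ℚ), ?_⟩
    have hc' : (c : ℝ) ≠ 0 := Int.cast_ne_zero.mpr hc
    push_cast
    field_simp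
    linarith

def GLRel (x y : ℝ) : Prop :=
  ∃ a b c d : ℤ, (a * d - b * c = 1 ∨ a * d - b * c = -1) ∧
    y = ((a : ℝ) * x + b) / ((c : ℝ) * x + d)

lemma det_ne (a b c d : ℤ) (h : a * d - b * c = 1 ∨ a * d - b * c = -1) :
    ¬(c = 0 ∧ d = 0) := by rintro ⟨rfl, rfl⟩; simp at h

lemma det_ne' (a b c d : ℤ) (h : a * d - b * c = 1 ∨ a * d - b * c = -1) :
    ¬(-c = 0 ∧ a = 0) := by
  rintro ⟨h1, rfl⟩
  have hc : c = 0 := by omega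
  subst hc
  simp at h

lemma irr_mobius (x : ℝ) (hx : Irrational x) (a b c d : ℤ) (hdet : a * d - b * c ≠ 0)
    (hden : (c : ℝ) * x + d ≠ 0) : Irrational (((a : ℝ) * x + b) / ((c : ℝ) * x + d)) := by
  rintro ⟨q, hq⟩
  have key : (a : ℝ) * x + b = q * ((c : ℝ) * x + d) := by
    rw [eq_div_iff hden] at hq
    linarith [hq]
  have key2 : x * ((a : ℝ) - q * c) = q * d - b := by linarith [key]
  rcases eq_or_ne ((a : ℝ) - q * c) 0 with h0 | h0
  · have hb : (q : ℝ) * d - b = 0 := by rw [← key2, h0, mul_zero]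
    have : ((a * d - b * c : ℤ) : ℝ) = 0 := by
      push_cast
      have ha : (a : ℝ) = q * c := by linarith
      have hb' : (b : ℝ) = q * d := by linarith
      rw [ha, hb']; ring
    exact hdet (by exact_mod_cast this)
  · apply hx
    refine ⟨(q * d - b) / (a - q * c), ?_⟩
    have h0' : ((a : ℚ) - q * c) ≠ 0 := by
      intro hh; apply h0; exact_mod_cast congrArg (Rat.cast : ℚ → ℝ) hh
    push_cast
    rw [div_eq_iff (by exact_mod_cast h0' : ((a:ℝ) - q*c) ≠ 0)]
    linarith [key2]

lemma glrel_irrational {x y : ℝ} (hx : Irrational x) (h : GLRel x y) : Irrational y := by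
  obtain ⟨a, b, c, d, hdet, heq⟩ := h
  subst heq
  exact irr_mobius x hx a b c d (by rcases hdet with h | h <;> omega)
    (lin_ne_zero x hx c d (det_ne a b c d hdet))

lemma glrel_refl (x : ℝ) : GLRel x x := by
  exact ⟨1, 0, 0, 1, Or.inl (by ring), by norm_num⟩

lemma glrel_symm {x y : ℝ} (hx : Irrational x) (h : GLRel x y) : GLRel y x := by
  obtain ⟨a, b, c, d, hdet, heq⟩ := h
  have hy : Irrational y := glrel_irrational hx ⟨a, b, c, d, hdet, heq⟩
  have hden : (c : ℝ) * x + d ≠ 0 := lin_ne_zero x hx c d (det_ne a b c d hdet)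
  have E1 : y * ((c : ℝ) * x + d) = (a : ℝ) * x + b := by
    rw [heq]; exact div_mul_cancel₀ _ hden
  refine ⟨d, -b, -c, a, ?_, ?_⟩
  · rcases hdet with h | h
    · exact Or.inl (by linarith [h])
    · exact Or.inr (by linarith [h])
  · have hden2 : ((-c : ℤ) : ℝ) * y + a ≠ 0 :=
      lin_ne_zero y hy (-c) a (det_ne' a b c d hdet)
    rw [eq_div_iff hden2]
    push_cast
    linear_combination -E1

lemma glrel_trans {x y z : ℝ} (hx : Irrational x) (h1 : GLRel x y) (h2 : GLRel y z) :
    GLRel x z := by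
  obtain ⟨a1, b1, c1, d1, hdet1, heq1⟩ := h1
  obtain ⟨a2, b2, c2, d2, hdet2, heq2⟩ := h2
  have hy : Irrational y := glrel_irrational hx ⟨a1, b1, c1, d1, hdet1, heq1⟩
  have hden1 : (c1 : ℝ) * x + d1 ≠ 0 := lin_ne_zero x hx c1 d1 (det_ne a1 b1 c1 d1 hdet1)
  have hden2 : (c2 : ℝ) * y + d2 ≠ 0 := lin_ne_zero y hy c2 d2 (det_ne a2 b2 c2 d2 hdet2)
  have E1 : y * ((c1 : ℝ) * x + d1) = (a1 : ℝ) * x + b1 := by rw [heq1]; exact div_mul_cancel₀ _ hden1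
  have E2 : z * ((c2 : ℝ) * y + d2) = (a2 : ℝ) * y + b2 := by rw [heq2]; exact div_mul_cancel₀ _ hden2
  have hdet : (a2 * a1 + b2 * c1) * (c2 * b1 + d2 * d1) -
      (a2 * b1 + b2 * d1) * (c2 * a1 + d2 * c1) = (a2 * d2 - b2 * c2) * (a1 * d1 - b1 * c1) := by
    ring
  refine ⟨a2 * a1 + b2 * c1, a2 * b1 + b2 * d1, c2 * a1 + d2 * c1, c2 * b1 + d2 * d1, ?_, ?_⟩
  · rcases hdet1 with h | h <;> rcases hdet2 with h' | h' <;> rw [hdet, h, h'] <;> norm_num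
  · have hCD : ((c2 * a1 + d2 * c1 : ℤ) : ℝ) * x + ((c2 * b1 + d2 * d1 : ℤ) : ℝ) ≠ 0 := by
      apply lin_ne_zero x hx
      apply det_ne (a2 * a1 + b2 * c1) (a2 * b1 + b2 * d1)
      rcases hdet1 with h | h <;> rcases hdet2 with h' | h' <;> rw [hdet, h, h'] <;> norm_num
    rw [eq_div_iff hCD]
    push_cast
    linear_combination ((c1 : ℝ) * x + d1) * E2 + ((a2 : ℝ) - z * c2) * E1

lemma glrel_cq (x : ℝ) (hx : Irrational x) : ∀ n, GLRel x (cq x n)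
  | 0 => glrel_refl x
  | n + 1 => by
    have step : GLRel (cq x n) (cq x (n + 1)) := by
      refine ⟨0, 1, 1, -⌊cq x n⌋, Or.inr (by ring), ?_⟩
      rw [cq_succ]
      push_cast
      ring_nf
    exact glrel_trans hx (glrel_cq x hx n) step

lemma easy_dir (x y : ℝ) (hx : Irrational x) (hy : Irrational y) (h : CFEquiv x y) :
    GLRel x y := by
  obtain ⟨i, j, hij⟩ := h
  have h1 : GLRel x (cq x i) := glrel_cq x hx i
  have h2 : GLRel (cq y j) y := glrel_symm hy (glrel_cq y hy j)
  rw [hij] at h1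
  exact glrel_trans hx h1 h2

lemma floor_add_frac (p : ℤ) (r : ℝ) (h0 : 0 < r) (h1 : r < 1) : ⌊(p : ℝ) + r⌋ = p := by
  rw [Int.floor_intCast_add]
  simp [Int.floor_eq_zero_iff, Set.mem_Ico, le_of_lt h0, h1]

lemma cq_one_eq (y : ℝ) (p : ℤ) (r : ℝ) (hy : y = p + r) (h0 : 0 < r) (h1 : r < 1) :
    cq y 1 = 1 / r := by
  rw [cq_succ]
  show 1 / (y - (⌊y⌋ : ℤ)) = 1 / r
  rw [hy, floor_add_frac p r h0 h1]
  ring_nf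

set_option maxHeartbeats 1000000 in
lemma core (t : ℝ) (ht : Irrational t) (ht1 : 1 < t) :
    ∀ N : ℕ, ∀ P P' Q Q' : ℤ, (Q + Q').toNat ≤ N →
    1 ≤ Q → Q' ≤ Q → 0 ≤ Q' →
    (P * Q' - P' * Q = 1 ∨ P * Q' - P' * Q = -1) →
    ∀ y : ℝ, y = ((P : ℝ) * t + P') / ((Q : ℝ) * t + Q') →
    ∃ m k, cq y m = cq t k := by
  have ht0 : (0 : ℝ) < t := by linarith
  have htne : t ≠ 0 := ne_of_gt ht0
  intro N
  induction N with
  | zero => intro P P' Q Q' hN hQ1 hQ'Q hQ'0 hdet y heq; omega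
  | succ N IH =>
    intro P P' Q Q' hN hQ1 hQ'Q hQ'0 hdet y heq
    have hQR : (1 : ℝ) ≤ (Q : ℝ) := by exact_mod_cast hQ1
    have hQ'R : (0 : ℝ) ≤ (Q' : ℝ) := by exact_mod_cast hQ'0
    have hden : (0 : ℝ) < (Q : ℝ) * t + Q' := by nlinarith
    rcases eq_or_lt_of_le hQ'0 with hQ'z | hQ'pos
    · -- Q' = 0
      have hQ'z : Q' = 0 := hQ'z.symm
      subst hQ'z
      have hQd : Q ∣ 1 := by
        rcases hdet with h | h
        · exact ⟨-P', by linarith⟩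
        · exact ⟨P', by linarith⟩
      have hQe : Q = 1 := le_antisymm (Int.le_of_dvd one_pos hQd) hQ1
      subst hQe
      have hP' : P' = 1 ∨ P' = -1 := by rcases hdet with h | h <;> omega
      have h1t : 0 < 1 / t := by positivity
      have h1t' : 1 / t < 1 := by rw [div_lt_one ht0]; exact ht1
      rcases hP' with hP' | hP'
      · subst hP'
        have hy2 : y = (P : ℝ) + 1 / t := by
          rw [heq]; push_cast; field_simp; ring
        refine ⟨1, 0, ?_⟩
        rw [cq_one_eq y P (1 / t) hy2 h1t h1t', one_div_one_div]
        rfl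
      · subst hP'
        have hy2 : y = ((P - 1 : ℤ) : ℝ) + (1 - 1 / t) := by
          rw [heq]; push_cast; field_simp; ring
        have hcq1 : cq y 1 = 1 / (1 - 1 / t) :=
          cq_one_eq y (P - 1) _ hy2 (by linarith) (by linarith)
        have htm1 : t - 1 > 0 := by linarith
        have hcq1' : cq y 1 = t / (t - 1) := by
          rw [hcq1]; field_simp
        have ht2 : t ≠ 2 := by
          intro h; exact (ht.ne_int 2) (by rw [h]; norm_num)
        rcases lt_or_gt_of_ne ht2 with hlt | hgt
        · -- 1 < t < 2 : cq y 1 = cq t 1 + 1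
          have hft : ⌊t⌋ = 1 := by
            rw [Int.floor_eq_iff]
            push_cast
            constructor <;> linarith
          have hct1 : cq t 1 = 1 / (t - 1) := by
            rw [cq_succ]
            show 1 / (cq t 0 - (⌊cq t 0⌋ : ℤ)) = _
            show 1 / (t - (⌊t⌋ : ℤ)) = _
            rw [hft]; norm_num
          have hkey : cq y 1 = cq t 1 + ((1 : ℤ) : ℝ) := by
            rw [hcq1', hct1]; push_cast; field_simp; ring
          refine ⟨2, 2, ?_⟩
          have e1 : cq y 2 = cq (cq y 1) 1 := (cq_shift y 1 1).symm
          have e2 : cq t 2 = cq (cq t 1) 1 := (cq_shift t 1 1).symm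
          rw [e1, e2, hkey, cq_one_add_int]
        · -- t > 2 : cq y 1 = 1 + 1/(t-1), cq y 2 = t - 1
          have htm1' : 1 < t - 1 := by linarith
          have hr0 : 0 < 1 / (t - 1) := by positivity
          have hr1 : 1 / (t - 1) < 1 := by rw [div_lt_one (by linarith)]; linarith
          have hkey : cq y 1 = ((1 : ℤ) : ℝ) + 1 / (t - 1) := by
            rw [hcq1']; push_cast; field_simp; ring
          have hcq2 : cq y 2 = t - 1 := by
            have e1 : cq y 2 = cq (cq y 1) 1 := (cq_shift y 1 1).symm
            rw [e1, cq_one_eq (cq y 1) 1 _ hkey hr0 hr1, one_div_one_div]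
          refine ⟨3, 1, ?_⟩
          have e1 : cq y 3 = cq (cq y 2) 1 := (cq_shift y 2 1).symm
          have e2 : t - 1 = t + ((-1 : ℤ) : ℝ) := by push_cast; ring
          rw [e1, hcq2, e2, cq_one_add_int]
    · -- Q' ≥ 1
      have hQ'1 : 1 ≤ Q' := hQ'pos
      rcases eq_or_lt_of_le hQ'Q with hQQ | hQgt
      · -- Q = Q'
        have hQQ' : Q' = Q := hQQ
        have hQd : Q ∣ 1 := by
          rcases hdet with h | h
          · exact ⟨P - P', by rw [hQQ'] at h; linear_combination -h⟩
          · exact ⟨P' - P, by rw [hQQ'] at h; linear_combination h⟩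
        have hQe : Q = 1 := le_antisymm (Int.le_of_dvd one_pos hQd) hQ1
        have hQ'e : Q' = 1 := by omega
        have hP : P = P' + 1 ∨ P = P' - 1 := by
          rw [hQe, hQ'e] at hdet; rcases hdet with h | h <;> omega
        rw [hQe, hQ'e] at heq
        have ht10 : (0:ℝ) < t + 1 := by linarith
        have h1t : 0 < 1 / (t + 1) := by positivity
        have h1t' : 1 / (t + 1) < 1 := by rw [div_lt_one ht10]; linarith
        rcases hP with hP | hP
        · subst hP
          have hy2 : y = ((P' : ℤ) : ℝ) + (1 - 1 / (t + 1)) := by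
            rw [heq]; push_cast; field_simp; ring
          have hcq1 : cq y 1 = 1 / (1 - 1 / (t + 1)) :=
            cq_one_eq y P' _ hy2 (by linarith) (by linarith)
          have hkey : cq y 1 = ((1 : ℤ) : ℝ) + 1 / t := by
            rw [hcq1]; push_cast; field_simp; rw [add_sub_cancel_right, div_self htne]
          have h1t0 : 0 < 1 / t := by positivity
          have h1t1 : 1 / t < 1 := by rw [div_lt_one ht0]; exact ht1
          refine ⟨2, 0, ?_⟩
          have e1 : cq y 2 = cq (cq y 1) 1 := (cq_shift y 1 1).symm
          rw [e1, cq_one_eq (cq y 1) 1 _ hkey h1t0 h1t1, one_div_one_div]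
          rfl
        · subst hP
          have hy2 : y = ((P' - 1 : ℤ) : ℝ) + 1 / (t + 1) := by
            rw [heq]; push_cast; field_simp; ring
          have hcq1 : cq y 1 = 1 / (1 / (t + 1)) :=
            cq_one_eq y (P' - 1) _ hy2 h1t h1t'
          have hkey : cq y 1 = t + ((1 : ℤ) : ℝ) := by
            rw [hcq1, one_div_one_div]; norm_num
          refine ⟨2, 1, ?_⟩
          have e1 : cq y 2 = cq (cq y 1) 1 := (cq_shift y 1 1).symm
          rw [e1, hkey, cq_one_add_int]
      · -- Q > Q' ≥ 1 : descent
        have hQ2 : 2 ≤ Q := by omega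
        have hdet0 : P * Q' - P' * Q ≠ 0 := by rcases hdet with h | h <;> omega
        have hy_irr : Irrational y := by
          rw [heq]; exact irr_mobius t ht P P' Q Q' hdet0 (ne_of_gt hden)
        set k : ℤ := ⌊y⌋ with hk
        have hfr0 : 0 < y - k := by
          have := Int.fract_pos.mpr (hy_irr.ne_int ⌊y⌋)
          rwa [Int.fract] at this
        have hfr1 : y - k < 1 := by
          have := Int.fract_lt_one y
          rwa [Int.fract] at this
        set P1 : ℤ := P - k * Q with hP1
        set P1' : ℤ := P' - k * Q' with hP1'
        have hnum : y - k = (((P1 : ℝ)) * t + P1') / ((Q : ℝ) * t + Q') := by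
          rw [heq, hP1, hP1']
          push_cast
          field_simp
          ring
        have h1 : (0 : ℝ) < (P1 : ℝ) * t + P1' := by
          have h := mul_pos hfr0 hden
          rw [hnum, div_mul_cancel₀ _ (ne_of_gt hden)] at h
          exact h
        have h2 : (P1 : ℝ) * t + P1' < (Q : ℝ) * t + Q' := by
          have h := (div_lt_one hden).mp (by rw [← hnum]; exact hfr1)
          exact h
        have hdet1 : Q * P1' - Q' * P1 = -(P * Q' - P' * Q) := by
          rw [hP1, hP1']; ring
        have hdetv : Q * P1' - Q' * P1 = 1 ∨ Q * P1' - Q' * P1 = -1 := by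
          rcases hdet with h | h <;> rw [hdet1, h] <;> [right; left] <;> ring
        -- integer inequalities
        have hi1 : 0 ≤ P1 := by
          by_contra hneg
          push_neg at hneg
          have hP1le : P1 ≤ -1 := by omega
          have hP1R : (P1 : ℝ) ≤ -1 := by exact_mod_cast hP1le
          have : (1 : ℝ) < (P1' : ℝ) := by nlinarith
          have hP1'2 : 2 ≤ P1' := by
            have : (1 : ℤ) < P1' := by exact_mod_cast this
            omega
          rcases hdetv with h | h <;> nlinarith
        have hi2 : 0 ≤ P1' := by
          by_contra hneg
          push_neg at hneg
          have hle : P1' ≤ -1 := by omega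
          have hR : (P1' : ℝ) ≤ -1 := by exact_mod_cast hle
          have hP1pos : 1 ≤ P1 := by
            rcases le_or_gt P1 0 with h | h
            · exfalso
              have : (P1 : ℝ) ≤ 0 := by exact_mod_cast h
              nlinarith
            · omega
          rcases hdetv with h | h <;> nlinarith
        have hi3 : 1 ≤ P1 := by
          rcases eq_or_lt_of_le hi1 with h0 | h0
          · exfalso
            have h0 : P1 = 0 := h0.symm
            rw [h0] at hdetv
            simp at hdetv
            rcases hdetv with h | h
            · have : Q ∣ 1 := ⟨P1', by linarith⟩
              have := Int.le_of_dvd one_pos this; omega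
            · have : Q ∣ 1 := ⟨-P1', by linarith⟩
              have := Int.le_of_dvd one_pos this; omega
          · omega
        have hi4 : P1 ≤ Q := by
          by_contra hgt'
          push_neg at hgt'
          have hge : Q + 1 ≤ P1 := by omega
          have hgeR : (Q : ℝ) + 1 ≤ (P1 : ℝ) := by exact_mod_cast hge
          have hstep : (Q' : ℝ) - P1' > t := by nlinarith
          have : P1' ≤ Q' - 2 := by
            have h1' : (P1' : ℝ) < Q' - 1 := by linarith
            have : (P1' : ℤ) < Q' - 1 := by exact_mod_cast h1'
            omega
          rcases hdetv with h | h <;> nlinarith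
        have hi5 : P1' ≤ Q' := by
          by_contra hgt'
          push_neg at hgt'
          have : Q' + 1 ≤ P1' := by omega
          rcases hdetv with h | h <;> nlinarith
        have hi6 : P1' ≤ P1 := by
          by_contra hgt'
          push_neg at hgt'
          have : P1 + 1 ≤ P1' := by omega
          rcases hdetv with h | h <;> nlinarith
        have hsum : P1 + P1' < Q + Q' := by
          rcases eq_or_lt_of_le hi4 with hEq | hLt
          · -- P1 = Q
            have hEq : P1 = Q := hEq
            have : (P1' : ℝ) < Q' := by
              rw [hEq] at h2
              push_cast at h2 ⊢
              linarith
            have : P1' < Q' := by exact_mod_cast this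
            omega
          · omega
        -- z = cq y 1
        have hz : cq y 1 = ((Q : ℝ) * t + Q') / ((P1 : ℝ) * t + P1') := by
          rw [cq_succ]
          show 1 / (y - (k : ℝ)) = _
          rw [hnum, one_div_div]
        obtain ⟨m, k', hmk⟩ := IH Q Q' P1 P1' (by omega) hi3 hi6 hi2 hdetv (cq y 1) hz
        refine ⟨1 + m, k', ?_⟩
        rw [← cq_shift y 1 m]
        exact hmk

noncomputable def cnum (x : ℝ) : ℕ → ℤ
  | 0 => 1
  | 1 => ⌊x⌋
  | n + 2 => ⌊cq x (n + 1)⌋ * cnum x (n + 1) + cnum x n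

noncomputable def cden (x : ℝ) : ℕ → ℤ
  | 0 => 0
  | 1 => 1
  | n + 2 => ⌊cq x (n + 1)⌋ * cden x (n + 1) + cden x n

lemma conv_identity (x : ℝ) (hx : Irrational x) :
    ∀ n, x * ((cden x (n + 1) : ℝ) * cq x (n + 1) + (cden x n : ℝ)) =
      (cnum x (n + 1) : ℝ) * cq x (n + 1) + (cnum x n : ℝ) := by
  intro n
  induction n with
  | zero =>
    have hf : x - (⌊x⌋ : ℤ) ≠ 0 := ne_of_gt (cq_fract_pos x hx 0)
    show x * ((cden x 1 : ℝ) * cq x 1 + (cden x 0 : ℝ)) =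
      (cnum x 1 : ℝ) * cq x 1 + (cnum x 0 : ℝ)
    simp only [cnum, cden, cq_succ]
    push_cast
    show x * (1 * (1 / (cq x 0 - (⌊cq x 0⌋:ℤ))) + 0) = (⌊x⌋:ℝ) * (1 / (cq x 0 - (⌊cq x 0⌋:ℤ))) + 1
    show x * (1 * (1 / (x - (⌊x⌋:ℤ))) + 0) = (⌊x⌋:ℝ) * (1 / (x - (⌊x⌋:ℤ))) + 1
    rw [add_zero, one_div, one_mul, ← div_eq_mul_inv, ← div_eq_mul_inv,
      div_add_one hf, div_eq_div_iff hf hf]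
    ring
  | succ n IHn =>
    have hfr : cq x (n + 1) - (⌊cq x (n + 1)⌋ : ℤ) ≠ 0 := ne_of_gt (cq_fract_pos x hx (n + 1))
    have hr : (cq x (n + 1) - (⌊cq x (n + 1)⌋ : ℤ)) * cq x (n + 2) = 1 := by
      rw [cq_succ x (n + 1), one_div, mul_inv_cancel₀ hfr]
    have hnum2 : (cnum x (n + 2) : ℝ) = (⌊cq x (n + 1)⌋ : ℝ) * cnum x (n + 1) + cnum x n := by
      show ((cnum x (n+2) : ℤ) : ℝ) = _
      rw [show cnum x (n+2) = ⌊cq x (n + 1)⌋ * cnum x (n + 1) + cnum x n from rfl]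
      push_cast; ring
    have hden2 : (cden x (n + 2) : ℝ) = (⌊cq x (n + 1)⌋ : ℝ) * cden x (n + 1) + cden x n := by
      rw [show cden x (n+2) = ⌊cq x (n + 1)⌋ * cden x (n + 1) + cden x n from rfl]
      push_cast; ring
    show x * ((cden x (n + 2) : ℝ) * cq x (n + 2) + (cden x (n + 1) : ℝ)) =
      (cnum x (n + 2) : ℝ) * cq x (n + 2) + (cnum x (n + 1) : ℝ)
    rw [hnum2, hden2]
    linear_combination cq x (n + 2) * IHn -
      (x * (cden x (n + 1) : ℝ) - (cnum x (n + 1) : ℝ)) * hr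

lemma conv_det (x : ℝ) :
    ∀ n, cnum x (n + 1) * cden x n - cnum x n * cden x (n + 1) = (-1) ^ (n + 1) := by
  intro n
  induction n with
  | zero => simp [cnum, cden]
  | succ n IHn =>
    have e1 : cnum x (n + 2) = ⌊cq x (n + 1)⌋ * cnum x (n + 1) + cnum x n := rfl
    have e2 : cden x (n + 2) = ⌊cq x (n + 1)⌋ * cden x (n + 1) + cden x n := rfl
    rw [e1, e2, pow_succ]
    linear_combination (-1 : ℤ) * IHn

lemma cden_nonneg_pos (x : ℝ) (hx : Irrational x) :
    ∀ n, 0 ≤ cden x n ∧ 1 ≤ cden x (n + 1) := by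
  intro n
  induction n with
  | zero => exact ⟨le_refl 0, le_refl 1⟩
  | succ n IHn =>
    obtain ⟨h0, h1⟩ := IHn
    have ha : 1 ≤ ⌊cq x (n + 1)⌋ := by
      have := one_lt_cq x hx n
      exact Int.le_floor.mpr (by exact_mod_cast le_of_lt this)
    constructor
    · linarith
    · have e2 : cden x (n + 2) = ⌊cq x (n + 1)⌋ * cden x (n + 1) + cden x n := rfl
      rw [e2]; nlinarith

lemma cden_grow (x : ℝ) (hx : Irrational x) :
    ∀ n : ℕ, (n : ℤ) ≤ cden x (n + 1) ∧ ((n : ℤ) + 1) ≤ cden x (n + 2) := by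
  intro n
  induction n with
  | zero =>
    refine ⟨by simp [cden], ?_⟩
    have := (cden_nonneg_pos x hx 1).2
    simpa using this
  | succ n IHn =>
    obtain ⟨h0, h1⟩ := IHn
    refine ⟨by exact_mod_cast h1, ?_⟩
    have ha : 1 ≤ ⌊cq x (n + 2)⌋ := by
      have := one_lt_cq x hx (n + 1)
      exact Int.le_floor.mpr (by exact_mod_cast le_of_lt this)
    have h2 : 1 ≤ cden x (n + 2) := (cden_nonneg_pos x hx (n + 1)).2
    have e2 : cden x (n + 3) = ⌊cq x (n + 2)⌋ * cden x (n + 2) + cden x (n + 1) := rfl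
    have : cden x (n + 2) + cden x (n + 1) ≤ cden x (n + 3) := by
      rw [e2]; nlinarith
    have h3 : 1 ≤ cden x (n + 1) := (cden_nonneg_pos x hx n).2
    have hg : ((n : ℤ) + 1 + 1) ≤ cden x (n + 3) := by omega
    push_cast
    exact hg

lemma err_bound (x : ℝ) (hx : Irrational x) :
    ∀ n, |(cnum x n : ℝ) - x * cden x n| ≤ 1 := by
  intro n
  induction n with
  | zero => simp [cnum, cden]
  | succ n IHn =>
    have hid := conv_identity x hx n
    have ht1 : 1 < cq x (n + 1) := one_lt_cq x hx n
    have ht0 : 0 < cq x (n + 1) := by linarith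
    have hrec : ((cnum x (n + 1) : ℝ) - x * cden x (n + 1)) * cq x (n + 1) =
        -((cnum x n : ℝ) - x * cden x n) := by linear_combination -hid
    have habs : |(cnum x (n + 1) : ℝ) - x * cden x (n + 1)| * cq x (n + 1) =
        |(cnum x n : ℝ) - x * cden x n| := by
      rw [← abs_of_pos ht0, ← abs_mul, hrec, abs_neg]
    nlinarith [abs_nonneg ((cnum x (n + 1) : ℝ) - x * cden x (n + 1))]

lemma glrel_pos_denom {x y : ℝ} (hx : Irrational x) (h : GLRel x y) :
    ∃ a b c d : ℤ, (a * d - b * c = 1 ∨ a * d - b * c = -1) ∧ 0 < (c : ℝ) * x + d ∧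
      y = ((a : ℝ) * x + b) / ((c : ℝ) * x + d) := by
  obtain ⟨a, b, c, d, hdet, heq⟩ := h
  have hne := lin_ne_zero x hx c d (det_ne a b c d hdet)
  rcases hne.lt_or_gt with hneg | hpos
  · refine ⟨-a, -b, -c, -d, ?_, ?_, ?_⟩
    · have e : (-a) * (-d) - (-b) * (-c) = a * d - b * c := by ring
      rw [e]; exact hdet
    · push_cast; linarith
    · have e1 : ((-a : ℤ) : ℝ) * x + ((-b : ℤ) : ℝ) = -((a : ℝ) * x + b) := by push_cast; ring
      have e2 : ((-c : ℤ) : ℝ) * x + ((-d : ℤ) : ℝ) = -((c : ℝ) * x + d) := by push_cast; ring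
      rw [e1, e2, neg_div_neg_eq]
      exact heq
  · exact ⟨a, b, c, d, hdet, hpos, heq⟩

set_option maxHeartbeats 1000000 in
lemma hard_dir (x y : ℝ) (hx : Irrational x) (h : GLRel x y) : CFEquiv x y := by
  obtain ⟨a, b, c, d, hdet, hpos, heq⟩ := glrel_pos_denom hx h
  set δ := (c : ℝ) * x + d with hδdef
  obtain ⟨M, hM⟩ := exists_nat_gt ((2 * |(c : ℝ)| + 1) / δ)
  have hMδ : 2 * |(c : ℝ)| + 1 < (M : ℝ) * δ := by
    rw [div_lt_iff₀ hpos] at hM; exact hM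
  set n : ℕ := M + 1 with hn
  set t : ℝ := cq x (n + 2) with htdef
  have ht : Irrational t := irrational_cq x hx (n + 2)
  have ht1 : 1 < t := one_lt_cq x hx (n + 1)
  set N2 : ℤ := cnum x (n + 2)
  set N1 : ℤ := cnum x (n + 1)
  set D2 : ℤ := cden x (n + 2)
  set D1 : ℤ := cden x (n + 1)
  set P : ℤ := a * N2 + b * D2 with hP
  set P' : ℤ := a * N1 + b * D1 with hP'
  set Q : ℤ := c * N2 + d * D2 with hQ
  set Q' : ℤ := c * N1 + d * D1 with hQ'
  -- error bounds
  have e1 : |(N1 : ℝ) - x * D1| ≤ 1 := err_bound x hx (n + 1)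
  have e2 : |(N2 : ℝ) - x * D2| ≤ 1 := err_bound x hx (n + 2)
  have hce1 : -|(c : ℝ)| ≤ (c : ℝ) * ((N1 : ℝ) - x * D1) ∧
      (c : ℝ) * ((N1 : ℝ) - x * D1) ≤ |(c : ℝ)| := by
    have h1 : |(c : ℝ) * ((N1 : ℝ) - x * D1)| ≤ |(c : ℝ)| := by
      rw [abs_mul]
      nlinarith [abs_nonneg ((c : ℝ)), abs_nonneg ((N1 : ℝ) - x * D1)]
    exact abs_le.mp h1
  have hce2 : -|(c : ℝ)| ≤ (c : ℝ) * ((N2 : ℝ) - x * D2) ∧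
      (c : ℝ) * ((N2 : ℝ) - x * D2) ≤ |(c : ℝ)| := by
    have h1 : |(c : ℝ) * ((N2 : ℝ) - x * D2)| ≤ |(c : ℝ)| := by
      rw [abs_mul]
      nlinarith [abs_nonneg ((c : ℝ)), abs_nonneg ((N2 : ℝ) - x * D2)]
    exact abs_le.mp h1
  -- denominator growth
  have hD1g : ((M : ℤ) + 1) ≤ D1 := by
    have := (cden_grow x hx (M + 1)).1
    exact_mod_cast this
  have hD0g : (M : ℤ) ≤ cden x (M + 1) := by
    have := (cden_grow x hx M).1
    exact_mod_cast this
  have hgap : D1 + cden x (M + 1) ≤ D2 := by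
    have ha : 1 ≤ ⌊cq x (M + 2)⌋ := by
      have := one_lt_cq x hx (M + 1)
      exact Int.le_floor.mpr (by exact_mod_cast le_of_lt this)
    have h2 : 1 ≤ cden x (M + 2) := (cden_nonneg_pos x hx (M + 1)).2
    have h3 : 0 ≤ cden x (M + 1) := (cden_nonneg_pos x hx (M + 1)).1
    have e3 : cden x (M + 3) = ⌊cq x (M + 2)⌋ * cden x (M + 2) + cden x (M + 1) := rfl
    have : cden x (M + 2) + cden x (M + 1) ≤ cden x (M + 3) := by rw [e3]; nlinarith
    have hh : D2 = cden x (M + 3) := rfl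
    have hh2 : D1 = cden x (M + 2) := rfl
    omega
  have hD1R : (M : ℝ) + 1 ≤ (D1 : ℝ) := by exact_mod_cast hD1g
  have hgapR : (M : ℝ) ≤ (D2 : ℝ) - D1 := by
    have : (M : ℤ) ≤ D2 - D1 := by omega
    exact_mod_cast this
  -- Q' decomposition
  have hQ'dec : (Q' : ℝ) = δ * D1 + (c : ℝ) * ((N1 : ℝ) - x * D1) := by
    rw [hQ']; push_cast; rw [hδdef]; ring
  have hQdec : (Q : ℝ) = δ * D2 + (c : ℝ) * ((N2 : ℝ) - x * D2) := by
    rw [hQ]; push_cast; rw [hδdef]; ring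
  have habs0 : 0 ≤ |(c : ℝ)| := abs_nonneg _
  have hQ'posR : (0 : ℝ) < (Q' : ℝ) := by
    rw [hQ'dec]
    nlinarith [hce1.1, mul_le_mul_of_nonneg_left hD1R (le_of_lt hpos)]
  have hQgapR : (Q' : ℝ) < (Q : ℝ) := by
    rw [hQ'dec, hQdec]
    nlinarith [hce1.2, hce2.1, mul_le_mul_of_nonneg_left hgapR (le_of_lt hpos)]
  have hQ'0 : 0 < Q' := by exact_mod_cast hQ'posR
  have hQ'Q : Q' < Q := by exact_mod_cast hQgapR
  -- determinant
  have hcd : N2 * D1 - N1 * D2 = (-1) ^ (n + 2) := conv_det x (n + 1)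
  have hdet2 : P * Q' - P' * Q = 1 ∨ P * Q' - P' * Q = -1 := by
    have key : P * Q' - P' * Q = (a * d - b * c) * (N2 * D1 - N1 * D2) := by
      rw [hP, hP', hQ, hQ']; ring
    rw [key, hcd]
    rcases Nat.even_or_odd (n + 2) with hev | hod
    · rw [hev.neg_one_pow]
      rcases hdet with h | h <;> [left; right] <;> rw [h] <;> ring
    · rw [hod.neg_one_pow]
      rcases hdet with h | h <;> [right; left] <;> rw [h] <;> ring
  -- transformation
  have hid : x * ((D2 : ℝ) * t + D1) = (N2 : ℝ) * t + N1 := conv_identity x hx (n + 1)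
  have hD2p : (1 : ℝ) ≤ (D2 : ℝ) := by
    have := (cden_nonneg_pos x hx (n + 1)).2
    exact_mod_cast this
  have hD1p : (0 : ℝ) ≤ (D1 : ℝ) := by
    have := (cden_nonneg_pos x hx n).2
    have h2 : (1 : ℝ) ≤ (D1 : ℝ) := by exact_mod_cast this
    linarith
  have hDpos : (0 : ℝ) < (D2 : ℝ) * t + D1 := by nlinarith
  have hQden : (Q : ℝ) * t + (Q' : ℝ) = δ * ((D2 : ℝ) * t + D1) := by
    rw [hQ, hQ', hδdef]; push_cast; linear_combination (-(c : ℝ)) * hid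
  have hPnum : (P : ℝ) * t + (P' : ℝ) = ((a : ℝ) * x + b) * ((D2 : ℝ) * t + D1) := by
    rw [hP, hP']; push_cast; linear_combination (-(a : ℝ)) * hid
  have heq2 : y = ((P : ℝ) * t + P') / ((Q : ℝ) * t + Q') := by
    rw [hPnum, hQden, mul_div_mul_right _ _ (ne_of_gt hDpos)]
    exact heq
  obtain ⟨m, k, hmk⟩ := core t ht ht1 (Q + Q').toNat P P' Q Q' le_rfl (by omega) (by omega)
    (by omega) hdet2 y heq2
  refine ⟨n + 2 + k, m, ?_⟩
  rw [← cq_shift x (n + 2) k]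
  exact hmk.symm

theorem serret (x y : ℝ) (hx : Irrational x) (hy : Irrational y) :
    (∃ a b c d : ℤ, (a * d - b * c = 1 ∨ a * d - b * c = -1) ∧
      y = ((a : ℝ) * x + b) / ((c : ℝ) * x + d)) ↔ CFEquiv x y := by
  constructor
  · intro h
    exact hard_dir x y hx h
  · intro h
    exact easy_dir x y hx hy h
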